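/- Let N ≥ 2 and A = A(1, N). Assume X, Y belong to Λ and the pair (supp(X), supp(Y)) is crossing, and let f: X → Y be a nonzero morphism in K^b(A-proj). Then there exist complexes X′, Y′ belonging to Λ, an inclusion inc: Y′ → Y, a projection pr: X → X′, and a crossing morphism f′: X′ → Y′ such that f = inc ∘ f′ ∘ pr in K^b(A-proj). -/

import Mathlib

open CategoryTheory Limits


section CyclicAlgebra

variable {N r : ℕ} [NeZero N] {A : Type*} [Ring A]

/-- The generators-and-relations data for the algebra `A(r, N)` given by the cyclic
quiver with `N` vertices `0, 1, …, N−1`, arrows `α_i : i → i+1` (indices modulo `N`),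
and the `r` relations `α_0α_{N−1}, α_1α_0, …, α_{r−1}α_{r−2}` (composed right to left). -/
structure CyclicNakayamaData (N r : ℕ) (A : Type*) [Ring A] [NeZero N] where
  e : ZMod N → A
  α : ZMod N → A
  idem : ∀ i j : ZMod N, e i * e j = if i = j then e i else 0
  sum_e : ∑ i : ZMod N, e i = 1
  alpha_e : ∀ i : ZMod N, α i * e i = α i
  e_alpha : ∀ i : ZMod N, e (i + 1) * α i = α i
  rel : ∀ j : ℕ, j < r → α (j : ZMod N) * α ((j : ZMod N) - 1) = 0

namespace CyclicNakayamaData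

/-- The product in `A` of the path of length `ℓ` starting at vertex `i`:
`α_{i+ℓ−1} ⋯ α_{i+1} α_i` (and `e i` for `ℓ = 0`). -/
def path (D : CyclicNakayamaData N r A) (i : ZMod N) : ℕ → A
  | 0 => D.e i
  | (ℓ + 1) => D.α (i + (ℓ : ZMod N)) * D.path i ℓ

variable (D : CyclicNakayamaData N r A)

@[simp] lemma path_zero (i : ZMod N) : D.path i 0 = D.e i := rfl

lemma path_succ (i : ZMod N) (ℓ : ℕ) :
    D.path i (ℓ + 1) = D.α (i + (ℓ : ZMod N)) * D.path i ℓ := rfl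

lemma path_one (i : ZMod N) : D.path i 1 = D.α i := by
  rw [path_succ, path_zero, Nat.cast_zero, add_zero, D.alpha_e]

lemma path_mul_e (i : ZMod N) (ℓ : ℕ) : D.path i ℓ * D.e i = D.path i ℓ := by
  induction ℓ with
  | zero => simpa using D.idem i i
  | succ ℓ ih => rw [path_succ, mul_assoc, ih]

lemma e_mul_path (i : ZMod N) (ℓ : ℕ) : D.e (i + (ℓ : ZMod N)) * D.path i ℓ = D.path i ℓ := by
  induction ℓ with
  | zero => simpa using D.idem i i
  | succ ℓ ih =>
      rw [path_succ, ← mul_assoc]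
      have h : i + ((ℓ + 1 : ℕ) : ZMod N) = (i + (ℓ : ZMod N)) + 1 := by push_cast; ring
      rw [h, D.e_alpha]

lemma path_split (i : ZMod N) (a b : ℕ) :
    D.path i (a + b) = D.path (i + (a : ZMod N)) b * D.path i a := by
  induction b with
  | zero => simpa using (D.e_mul_path i a).symm
  | succ b ih =>
      have h1 : a + (b + 1) = (a + b) + 1 := by ring
      rw [h1, path_succ, ih, path_succ, ← mul_assoc]
      congr 2
      push_cast
      ring

/-- The key vanishing: a path passing a relation junction is zero. If `a, b ≥ 1` and the
vertex `i + a` equals some `j` with `j < r`, then `path (i+a) b * path i a = 0`. -/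
lemma path_mul_path_eq_zero (i : ZMod N) (a b : ℕ) (ha : 1 ≤ a) (hb : 1 ≤ b)
    (hj : ∃ j : ℕ, j < r ∧ i + (a : ZMod N) = (j : ZMod N)) :
    D.path (i + (a : ZMod N)) b * D.path i a = 0 := by
  obtain ⟨j, hjr, hji⟩ := hj
  obtain ⟨a', rfl⟩ : ∃ a', a = a' + 1 := ⟨a - 1, by omega⟩
  obtain ⟨b', rfl⟩ : ∃ b', b = b' + 1 := ⟨b - 1, by omega⟩
  have h1 : D.path (i + ((a' + 1 : ℕ) : ZMod N)) (b' + 1) =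
      D.path ((i + ((a' + 1 : ℕ) : ZMod N)) + ((1 : ℕ) : ZMod N)) b' *
        D.α (i + ((a' + 1 : ℕ) : ZMod N)) := by
    have h := D.path_split (i + ((a' + 1 : ℕ) : ZMod N)) 1 b'
    rw [D.path_one] at h
    rw [Nat.add_comm 1 b'] at h
    exact h
  have h2 : D.path i (a' + 1) = D.α (i + (a' : ZMod N)) * D.path i a' := D.path_succ i a'
  have hαα : D.α (i + ((a' + 1 : ℕ) : ZMod N)) * D.α (i + (a' : ZMod N)) = 0 := by
    have h3 : i + (a' : ZMod N) = (j : ZMod N) - 1 := by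
      rw [← hji, Nat.cast_add, Nat.cast_one]; ring
    rw [hji, h3]
    exact D.rel j hjr
  rw [h1, h2, mul_assoc, ← mul_assoc (D.α (i + ((a' + 1 : ℕ) : ZMod N))), hαα, zero_mul,
    mul_zero]

end CyclicNakayamaData

end CyclicAlgebra


namespace PaperCZ

variable {A : Type*} [Ring A]

/-- The left ideal `{x | x ε = x}`; for an idempotent `ε = e_i` this is the
indecomposable projective module `A e_i`. -/
def emod (A : Type*) [Ring A] (ε : A) : Submodule A A where
  carrier := {x | x * ε = x}
  add_mem' := by intro x y hx hy; simp only [Set.mem_setOf_eq] at *; rw [add_mul, hx, hy]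
  zero_mem' := by simp
  smul_mem' := by
    intro a x hx; simp only [Set.mem_setOf_eq, smul_eq_mul] at *; rw [mul_assoc, hx]

lemma mem_emod {ε x : A} (h : x * ε = x) : x ∈ emod A ε := h

/-- The projective module `A ε` as an object of `ModuleCat A`. -/
def PM (A : Type*) [Ring A] (ε : A) : ModuleCat A := ModuleCat.of A (emod A ε)

/-- Right multiplication `A ε → A ε′`, `x ↦ x p`, for `p` with `p ε′ = p`. -/
def rmul (ε : A) {ε' p : A} (hp : p * ε' = p) : PM A ε ⟶ PM A ε' :=
  ModuleCat.ofHom (X := emod A ε) (Y := emod A ε')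
    { toFun := fun x => ⟨x.1 * p, mem_emod (by rw [mul_assoc, hp])⟩
      map_add' := by intro x y; apply Subtype.ext; simp [add_mul]
      map_smul' := by intro a x; apply Subtype.ext; simp [mul_assoc] }

lemma rmul_apply (ε : A) {ε' p : A} (hp : p * ε' = p) (x : PM A ε) :
    (rmul ε hp x).1 = x.1 * p := rfl

/-- The "strand" complex determined by a family of idempotents `ε i` and connecting
elements `p i` with `p i * ε (i+1) = p i` and `p i * p (i+1) = 0`: the complex
`⋯ → A ε_i → A ε_{i+1} → ⋯` whose differentials are right multiplication by the `p i`. -/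
noncomputable def strand (ε p : ℤ → A) (hp : ∀ i, p i * ε (i + 1) = p i)
    (hsq : ∀ i, p i * p (i + 1) = 0) : CochainComplex (ModuleCat A) ℤ :=
  CochainComplex.of (fun i => PM A (ε i)) (fun i => rmul (ε i) (hp i))
    (fun i => by
      ext x
      apply Subtype.ext
      change (x.1 * p i) * p (i + 1) = _
      rw [mul_assoc, hsq i, mul_zero]
      rfl)


end PaperCZ

namespace PaperCZ

open CyclicNakayamaData

section RankOne

variable {N : ℕ} [NeZero N] {A : Type*} [Ring A]
variable (D : CyclicNakayamaData N 1 A)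

/-- `φ`: the multiplier of the unnamed arrow `P₀ → P₀`, i.e. the full cycle
`α_{N−1}⋯α₁α₀`. -/
def cyc : A := D.path 0 N

/-- the multiplier of the unnamed arrow `Q_a → P₀`, i.e. `α_{a−1}⋯α₁α₀`. -/
def toP (a : ℕ) : A := D.path 0 a

/-- the multiplier of the unnamed arrow `P₀ → Q_b`, i.e. `α_{N−1}⋯α_{b+1}α_b`. -/
def fromP (b : ℕ) : A := D.path (b : ZMod N) (N - b)

/-- the multiplier of the unnamed arrow `Q_a → Q_b` (`b < a`), i.e. `α_{a−1}⋯α_b`. -/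
def qq (a b : ℕ) : A := D.path (b : ZMod N) (a - b)

lemma one_le_N : 1 ≤ N := Nat.one_le_iff_ne_zero.mpr (NeZero.ne N)

lemma mul_path_zero (i : ZMod N) (a b : ℕ) (ha : 1 ≤ a) (hb : 1 ≤ b)
    (hia : i + (a : ZMod N) = 0) : D.path 0 b * D.path i a = 0 := by
  have h := D.path_mul_path_eq_zero i a b ha hb ⟨0, Nat.zero_lt_one, by rw [hia, Nat.cast_zero]⟩
  rwa [hia] at h

lemma cast_add_sub_self {b : ℕ} (hb : b ≤ N) :
    ((b : ZMod N) + ((N - b : ℕ) : ZMod N)) = 0 := by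
  rw [← Nat.cast_add, Nat.add_sub_cancel' hb, ZMod.natCast_self]

lemma cyc_mul_cyc : cyc D * cyc D = 0 :=
  mul_path_zero D 0 N N (one_le_N (N := N)) (one_le_N (N := N))
    (by rw [zero_add, ZMod.natCast_self])

lemma toP_mul_cyc {a : ℕ} (ha : 1 ≤ a) : toP D a * cyc D = 0 :=
  mul_path_zero D 0 N a (one_le_N (N := N)) ha (by rw [zero_add, ZMod.natCast_self])

lemma cyc_mul_fromP {b : ℕ} (hb : b < N) : cyc D * fromP D b = 0 :=
  mul_path_zero D (b : ZMod N) (N - b) N (by omega) (one_le_N (N := N))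
    (cast_add_sub_self (le_of_lt hb))

lemma toP_mul_fromP {a b : ℕ} (ha : 1 ≤ a) (hb : b < N) : toP D a * fromP D b = 0 :=
  mul_path_zero D (b : ZMod N) (N - b) a (by omega) ha (cast_add_sub_self (le_of_lt hb))

lemma cyc_mul_e : cyc D * D.e 0 = cyc D := D.path_mul_e 0 N
lemma toP_mul_e (a : ℕ) : toP D a * D.e 0 = toP D a := D.path_mul_e 0 a
lemma fromP_mul_e (b : ℕ) : fromP D b * D.e (b : ZMod N) = fromP D b := D.path_mul_e _ _
lemma qq_mul_e (a b : ℕ) : qq D a b * D.e (b : ZMod N) = qq D a b := D.path_mul_e _ _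

end RankOne


end PaperCZ


namespace PaperCZ

section Complexes

variable {N : ℕ} [NeZero N] {A : Type*} [Ring A]
variable (D : CyclicNakayamaData N 1 A)

/-- The complex `X_{m,n}`. -/
noncomputable def XC (m n : ℤ) : CochainComplex (ModuleCat A) ℤ :=
  strand (fun i => if m ≤ i ∧ i ≤ n then D.e 0 else 0)
    (fun i => if m ≤ i ∧ i < n then cyc D else 0)
    (by
      intro i
      try dsimp only
      by_cases h : m ≤ i ∧ i < n
      · rw [if_pos h, if_pos (show m ≤ i + 1 ∧ i + 1 ≤ n by omega)]
        exact cyc_mul_e D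
      · rw [if_neg h, zero_mul])
    (by
      intro i
      try dsimp only
      by_cases h : m ≤ i ∧ i < n
      · by_cases h' : m ≤ i + 1 ∧ i + 1 < n
        · rw [if_pos h, if_pos h']; exact cyc_mul_cyc D
        · rw [if_pos h, if_neg h', mul_zero]
      · rw [if_neg h, zero_mul])

/-- The complex `L_{m,n,a}`. -/
noncomputable def LC (m n : ℤ) (a : ℕ) (ha : 1 ≤ a) : CochainComplex (ModuleCat A) ℤ :=
  strand
    (fun i => if i = m then D.e (a : ZMod N) else if m < i ∧ i ≤ n then D.e 0 else 0)
    (fun i => if i = m ∧ m < n then toP D a else if m < i ∧ i < n then cyc D else 0)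
    (by
      intro i
      try dsimp only
      by_cases h1 : i = m ∧ m < n
      · rw [if_pos h1, if_neg (show ¬ (i + 1 = m) by omega),
          if_pos (show m < i + 1 ∧ i + 1 ≤ n by omega)]
        exact toP_mul_e D a
      · by_cases h2 : m < i ∧ i < n
        · rw [if_neg h1, if_pos h2, if_neg (show ¬ (i + 1 = m) by omega),
            if_pos (show m < i + 1 ∧ i + 1 ≤ n by omega)]
          exact cyc_mul_e D
        · rw [if_neg h1, if_neg h2, zero_mul])
    (by
      intro i
      try dsimp only
      by_cases h1 : i = m ∧ m < n
      · by_cases h2 : m < i + 1 ∧ i + 1 < n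
        · rw [if_pos h1, if_neg (show ¬ (i + 1 = m ∧ m < n) by omega), if_pos h2]
          exact toP_mul_cyc D ha
        · rw [if_pos h1, if_neg (show ¬ (i + 1 = m ∧ m < n) by omega), if_neg h2, mul_zero]
      · by_cases h2 : m < i ∧ i < n
        · by_cases h3 : m < i + 1 ∧ i + 1 < n
          · rw [if_neg h1, if_pos h2, if_neg (show ¬ (i + 1 = m ∧ m < n) by omega), if_pos h3]
            exact cyc_mul_cyc D
          · rw [if_neg h1, if_pos h2, if_neg (show ¬ (i + 1 = m ∧ m < n) by omega),
              if_neg h3, mul_zero]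
        · rw [if_neg h1, if_neg h2, zero_mul])

/-- The complex `R_{m,n,b}`. -/
noncomputable def RC (m n : ℤ) (b : ℕ) (hb : b < N) : CochainComplex (ModuleCat A) ℤ :=
  strand
    (fun i => if m ≤ i ∧ i < n then D.e 0 else if i = n then D.e (b : ZMod N) else 0)
    (fun i => if m ≤ i ∧ i + 1 < n then cyc D else
      if m ≤ i ∧ i + 1 = n then fromP D b else 0)
    (by
      intro i
      try dsimp only
      by_cases h1 : m ≤ i ∧ i + 1 < n
      · rw [if_pos h1, if_pos (show m ≤ i + 1 ∧ i + 1 < n by omega)]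
        exact cyc_mul_e D
      · by_cases h2 : m ≤ i ∧ i + 1 = n
        · rw [if_neg h1, if_pos h2, if_neg (show ¬ (m ≤ i + 1 ∧ i + 1 < n) by omega),
            if_pos (show i + 1 = n by omega)]
          exact fromP_mul_e D b
        · rw [if_neg h1, if_neg h2, zero_mul])
    (by
      intro i
      try dsimp only
      by_cases h1 : m ≤ i ∧ i + 1 < n
      · by_cases h2 : m ≤ i + 1 ∧ i + 1 + 1 < n
        · rw [if_pos h1, if_pos h2]; exact cyc_mul_cyc D
        · by_cases h3 : m ≤ i + 1 ∧ i + 1 + 1 = n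
          · rw [if_pos h1, if_neg h2, if_pos h3]; exact cyc_mul_fromP D hb
          · rw [if_pos h1, if_neg h2, if_neg h3, mul_zero]
      · by_cases h2 : m ≤ i ∧ i + 1 = n
        · rw [if_neg h1, if_pos h2, if_neg (show ¬ (m ≤ i + 1 ∧ i + 1 + 1 < n) by omega),
            if_neg (show ¬ (m ≤ i + 1 ∧ i + 1 + 1 = n) by omega), mul_zero]
        · rw [if_neg h1, if_neg h2, zero_mul])

/-- The complex `B_{m,n,a,b}`. -/
noncomputable def BC (m n : ℤ) (a b : ℕ) (ha : 1 ≤ a) (hb : b < N) :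
    CochainComplex (ModuleCat A) ℤ :=
  strand
    (fun i => if i = m then D.e (a : ZMod N) else if m < i ∧ i < n then D.e 0 else
      if i = n then D.e (b : ZMod N) else 0)
    (fun i => if i = m ∧ m + 1 < n then toP D a else
      if i = m ∧ m + 1 = n then qq D a b else
      if m < i ∧ i + 1 < n then cyc D else
      if m < i ∧ i + 1 = n then fromP D b else 0)
    (by
      intro i
      try dsimp only
      by_cases h1 : i = m ∧ m + 1 < n
      · rw [if_pos h1, if_neg (show ¬ (i + 1 = m) by omega),
          if_pos (show m < i + 1 ∧ i + 1 < n by omega)]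
        exact toP_mul_e D a
      · by_cases h1' : i = m ∧ m + 1 = n
        · rw [if_neg h1, if_pos h1', if_neg (show ¬ (i + 1 = m) by omega),
            if_neg (show ¬ (m < i + 1 ∧ i + 1 < n) by omega),
            if_pos (show i + 1 = n by omega)]
          exact qq_mul_e D a b
        · by_cases h2 : m < i ∧ i + 1 < n
          · rw [if_neg h1, if_neg h1', if_pos h2, if_neg (show ¬ (i + 1 = m) by omega),
              if_pos (show m < i + 1 ∧ i + 1 < n by omega)]
            exact cyc_mul_e D
          · by_cases h3 : m < i ∧ i + 1 = n
            · rw [if_neg h1, if_neg h1', if_neg h2, if_pos h3,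
                if_neg (show ¬ (i + 1 = m) by omega),
                if_neg (show ¬ (m < i + 1 ∧ i + 1 < n) by omega),
                if_pos (show i + 1 = n by omega)]
              exact fromP_mul_e D b
            · rw [if_neg h1, if_neg h1', if_neg h2, if_neg h3, zero_mul])
    (by
      intro i
      try dsimp only
      by_cases h1 : i = m ∧ m + 1 < n
      · by_cases h2 : m < i + 1 ∧ i + 1 + 1 < n
        · rw [if_pos h1, if_neg (show ¬ (i + 1 = m ∧ m + 1 < n) by omega),
            if_neg (show ¬ (i + 1 = m ∧ m + 1 = n) by omega), if_pos h2]
          exact toP_mul_cyc D ha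
        · by_cases h3 : m < i + 1 ∧ i + 1 + 1 = n
          · rw [if_pos h1, if_neg (show ¬ (i + 1 = m ∧ m + 1 < n) by omega),
              if_neg (show ¬ (i + 1 = m ∧ m + 1 = n) by omega), if_neg h2, if_pos h3]
            exact toP_mul_fromP D ha hb
          · rw [if_pos h1, if_neg (show ¬ (i + 1 = m ∧ m + 1 < n) by omega),
              if_neg (show ¬ (i + 1 = m ∧ m + 1 = n) by omega), if_neg h2, if_neg h3,
              mul_zero]
      · by_cases h1' : i = m ∧ m + 1 = n
        · rw [if_neg h1, if_pos h1', if_neg (show ¬ (i + 1 = m ∧ m + 1 < n) by omega),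
            if_neg (show ¬ (i + 1 = m ∧ m + 1 = n) by omega),
            if_neg (show ¬ (m < i + 1 ∧ i + 1 + 1 < n) by omega),
            if_neg (show ¬ (m < i + 1 ∧ i + 1 + 1 = n) by omega), mul_zero]
        · by_cases h2 : m < i ∧ i + 1 < n
          · by_cases h3 : m < i + 1 ∧ i + 1 + 1 < n
            · rw [if_neg h1, if_neg h1', if_pos h2,
                if_neg (show ¬ (i + 1 = m ∧ m + 1 < n) by omega),
                if_neg (show ¬ (i + 1 = m ∧ m + 1 = n) by omega), if_pos h3]
              exact cyc_mul_cyc D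
            · by_cases h4 : m < i + 1 ∧ i + 1 + 1 = n
              · rw [if_neg h1, if_neg h1', if_pos h2,
                  if_neg (show ¬ (i + 1 = m ∧ m + 1 < n) by omega),
                  if_neg (show ¬ (i + 1 = m ∧ m + 1 = n) by omega), if_neg h3, if_pos h4]
                exact cyc_mul_fromP D hb
              · rw [if_neg h1, if_neg h1', if_pos h2,
                  if_neg (show ¬ (i + 1 = m ∧ m + 1 < n) by omega),
                  if_neg (show ¬ (i + 1 = m ∧ m + 1 = n) by omega), if_neg h3, if_neg h4,
                  mul_zero]
          · by_cases h3 : m < i ∧ i + 1 = n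
            · rw [if_neg h1, if_neg h1', if_neg h2, if_pos h3,
                if_neg (show ¬ (i + 1 = m ∧ m + 1 < n) by omega),
                if_neg (show ¬ (i + 1 = m ∧ m + 1 = n) by omega),
                if_neg (show ¬ (m < i + 1 ∧ i + 1 + 1 < n) by omega),
                if_neg (show ¬ (m < i + 1 ∧ i + 1 + 1 = n) by omega), mul_zero]
            · rw [if_neg h1, if_neg h1', if_neg h2, if_neg h3, zero_mul])

/-- The complex `Z_{m,a,b}`. -/
noncomputable def ZC (m : ℤ) (a b : ℕ) : CochainComplex (ModuleCat A) ℤ :=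
  strand
    (fun i => if i = m then D.e (a : ZMod N) else if i = m + 1 then D.e (b : ZMod N) else 0)
    (fun i => if i = m then qq D a b else 0)
    (by
      intro i
      try dsimp only
      by_cases h : i = m
      · rw [if_pos h, if_neg (show ¬ (i + 1 = m) by omega), if_pos (show i + 1 = m + 1 by omega)]
        exact qq_mul_e D a b
      · rw [if_neg h, zero_mul])
    (by
      intro i
      try dsimp only
      by_cases h : i = m
      · rw [if_pos h, if_neg (show ¬ (i + 1 = m) by omega), mul_zero]
      · rw [if_neg h, zero_mul])

end Complexes

end PaperCZ

namespace PaperCZ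

section Lam

variable {N : ℕ} [NeZero N] {A : Type*} [Ring A]

/-- A vertex `v` is a "bad" starting vertex when the length-two path starting at `v`
is one of the `r` relations, i.e. `v = j - 1` for some `j < r`. -/
def BadVertex (N r : ℕ) (v : ZMod N) : Prop := ∃ j : ℕ, j < r ∧ v = (j : ZMod N) - 1

/-- The path of length `ℓ` starting at vertex `i` avoids all relations. -/
def AdmissiblePath (N r : ℕ) (i : ZMod N) (ℓ : ℕ) : Prop :=
  ∀ t : ℕ, t + 2 ≤ ℓ → ¬ BadVertex N r (i + (t : ZMod N))

/-- `A` is presented by the cyclic quiver with relations: the images of the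
admissible paths form a `k`-basis. -/
def IsCyclicNakayama (k : Type*) [Field k] [Algebra k A] {r : ℕ}
    (D : CyclicNakayamaData N r A) : Prop :=
  ∃ bas : Module.Basis {p : ZMod N × ℕ // AdmissiblePath N r p.1 p.2} k A,
    ∀ p, bas p = D.path p.1.1 p.1.2

/-- The index set `Λ` of the complexes `X_{m,n}`, `L_{m,n,a}`, `R_{m,n,b}`,
`B_{m,n,a,b}`, `Z_{m,a,b}` (for `r = 1`). -/
inductive LamIdx (N : ℕ) : Type where
  | X : ∀ (m n : ℤ), m ≤ n → LamIdx N
  | L : ∀ (m n : ℤ), m ≤ n → ∀ a : ℕ, 1 ≤ a → a < N → LamIdx N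
  | R : ∀ (m n : ℤ), m ≤ n → ∀ b : ℕ, 1 ≤ b → b < N → LamIdx N
  | B : ∀ (m n : ℤ), m + 2 ≤ n → ∀ a b : ℕ, 1 ≤ a → a < N → 1 ≤ b → b < N → LamIdx N
  | Z : ∀ (m : ℤ) (a b : ℕ), 1 ≤ b → b < a → a < N → LamIdx N

variable (D : CyclicNakayamaData N 1 A)

/-- The underlying cochain complex of a member of `Λ`. -/
noncomputable def LamIdx.toCplx : LamIdx N → CochainComplex (ModuleCat A) ℤ
  | .X m n _ => XC D m n
  | .L m n _ a ha _ => LC D m n a ha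
  | .R m n _ b _ hb => RC D m n b hb
  | .B m n _ a b ha _ _ hb => BC D m n a b ha hb
  | .Z m a b _ _ _ => ZC D m a b

/-- The lower end of the support. -/
def LamIdx.lo : LamIdx N → ℤ
  | .X m _ _ => m
  | .L m _ _ _ _ _ => m
  | .R m _ _ _ _ _ => m
  | .B m _ _ _ _ _ _ _ _ => m
  | .Z m _ _ _ _ _ => m

/-- The upper end of the support. -/
def LamIdx.hi : LamIdx N → ℤ
  | .X _ n _ => n
  | .L _ n _ _ _ _ => n
  | .R _ n _ _ _ _ => n
  | .B _ n _ _ _ _ _ _ _ => n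
  | .Z m _ _ _ _ _ => m + 1

/-- The member of `Λ`, as an object of the (bounded) homotopy category. -/
noncomputable def Kob (I : LamIdx N) : HomotopyCategory (ModuleCat A) (ComplexShape.up ℤ) :=
  (HomotopyCategory.quotient (ModuleCat A) (ComplexShape.up ℤ)).obj (I.toCplx D)

/-- A bounded complex of finite projective modules. -/
def GoodCplx (C : CochainComplex (ModuleCat A) ℤ) : Prop :=
  (∃ a b : ℤ, ∀ n : ℤ, (n < a ∨ b < n) → IsZero (C.X n)) ∧
  (∀ n : ℤ, Projective (C.X n) ∧ Module.Finite A (C.X n))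

/-- Membership in `K^b(A-proj)`, as a full subcategory of the homotopy category:
the objects isomorphic to bounded complexes of finite projective modules. -/
def InKbProj (X : HomotopyCategory (ModuleCat A) (ComplexShape.up ℤ)) : Prop :=
  ∃ C : CochainComplex (ModuleCat A) ℤ, GoodCplx C ∧
    Nonempty (X ≅ (HomotopyCategory.quotient (ModuleCat A) (ComplexShape.up ℤ)).obj C)

/-- Indecomposability of `X` inside the full subcategory of objects satisfying `P`:
`X` is nonzero and admits no biproduct decomposition into two nonzero objects
satisfying `P`. -/
def IndecIn {T : Type*} [Category T] [Preadditive T] (P : T → Prop) (X : T) : Prop :=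
  ¬ IsZero X ∧ ∀ (Y Z : T), P Y → P Z → ∀ (i : Y ⟶ X) (p : X ⟶ Y) (j : Z ⟶ X) (q : X ⟶ Z),
    i ≫ p = 𝟙 Y → j ≫ q = 𝟙 Z → i ≫ q = 0 → j ≫ p = 0 → p ≫ i + q ≫ j = 𝟙 X →
    IsZero Y ∨ IsZero Z

end Lam

end PaperCZ

namespace PaperCZ

section Delta

variable {N : ℕ} [NeZero N] {A : Type*} [Ring A]

/-- A chain map between strand complexes, given by right multiplications. -/
noncomputable def strandMap (ε p : ℤ → A) (hp : ∀ i, p i * ε (i + 1) = p i)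
    (hsq : ∀ i, p i * p (i + 1) = 0)
    (ε' p' : ℤ → A) (hp' : ∀ i, p' i * ε' (i + 1) = p' i)
    (hsq' : ∀ i, p' i * p' (i + 1) = 0)
    (q : ℤ → A) (hq : ∀ i, q i * ε' i = q i)
    (hcomm : ∀ i, p i * q (i + 1) = q i * p' i) :
    strand ε p hp hsq ⟶ strand ε' p' hp' hsq' :=
  CochainComplex.ofHom (fun i => rmul (ε i) (hq i))
    (fun i => by
      dsimp only [strand]
      rw [CochainComplex.of_d, CochainComplex.of_d]
      ext x
      apply Subtype.ext
      change (x.1 * q i) * p' i = (x.1 * p i) * q (i + 1)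
      rw [mul_assoc, mul_assoc, hcomm i])

variable (D : CyclicNakayamaData N 1 A)

/-- The almost-vanishing endomorphism `Δ_{m,n}` of `X_{m,n}`: the chain map whose
component in degree `m` is `φ` and which vanishes elsewhere. -/
noncomputable def DeltaC (m n : ℤ) (h : m ≤ n) : XC D m n ⟶ XC D m n :=
  strandMap _ _ _ _ _ _ _ _
    (fun i => if i = m then cyc D else 0)
    (by
      intro i
      try dsimp only
      by_cases hi : i = m
      · rw [if_pos hi, if_pos (show m ≤ i ∧ i ≤ n by omega)]
        exact cyc_mul_e D
      · rw [if_neg hi, zero_mul])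
    (by
      intro i
      try dsimp only
      by_cases him : i = m
      · rw [him, if_neg (show ¬ (m + 1 = m) by omega), mul_zero, if_pos rfl]
        by_cases hmn : m ≤ m ∧ m < n
        · rw [if_pos hmn, cyc_mul_cyc D]
        · rw [if_neg hmn, mul_zero]
      · rw [if_neg him]
        by_cases him1 : i + 1 = m
        · rw [if_pos him1, if_neg (show ¬ (m ≤ i ∧ i < n) by omega), zero_mul, zero_mul]
        · rw [if_neg him1, mul_zero, zero_mul])

/-- `Δ_{m,n}` as an endomorphism in the homotopy category. -/
noncomputable def DeltaK (m n : ℤ) (h : m ≤ n) :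
    Kob D (LamIdx.X m n h) ⟶ Kob D (LamIdx.X m n h) :=
  (HomotopyCategory.quotient (ModuleCat A) (ComplexShape.up ℤ)).map (DeltaC D m n h)

/-- Almost-vanishing endomorphism, within the full subcategory of objects
satisfying `P`. -/
def AlmostVanishingIn {T : Type*} [Category T] [Preadditive T] (P : T → Prop)
    {X : T} (Δ : X ⟶ X) : Prop :=
  Δ ≠ 0 ∧ ¬ IsIso Δ ∧
  (∀ Y, P Y → ∀ f : Y ⟶ X, ¬ (∃ s : X ⟶ Y, s ≫ f = 𝟙 X) → f ≫ Δ = 0) ∧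
  (∀ Z, P Z → ∀ g : X ⟶ Z, ¬ (∃ rr : Z ⟶ X, g ≫ rr = 𝟙 X) → Δ ≫ g = 0)

end Delta

end PaperCZ

namespace PaperCZ

section ELemmas

variable {N : ℕ} [NeZero N] {A : Type*} [Ring A]
variable (D : CyclicNakayamaData N 1 A)

lemma e_mul_e (v : ZMod N) : D.e v * D.e v = D.e v := by simpa using D.idem v v

lemma e_mul_cyc : D.e 0 * cyc D = cyc D := by
  have h := D.e_mul_path (0 : ZMod N) N
  rwa [show (0 : ZMod N) + (N : ZMod N) = 0 by rw [ZMod.natCast_self, add_zero]] at h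

lemma e_mul_toP (a : ℕ) : D.e (a : ZMod N) * toP D a = toP D a := by
  have h := D.e_mul_path (0 : ZMod N) a
  rwa [zero_add] at h

lemma e_mul_fromP {b : ℕ} (hb : b ≤ N) : D.e 0 * fromP D b = fromP D b := by
  have h := D.e_mul_path (b : ZMod N) (N - b)
  rwa [cast_add_sub_self hb] at h

end ELemmas

end PaperCZ

namespace PaperCZ

section Generators

variable {N : ℕ} [NeZero N] {A : Type*} [Ring A]
variable (D : CyclicNakayamaData N 1 A)

/-- The canonical inclusion `X_{m,n} → X_{m−1,n}`. -/
noncomputable def incXC (m n : ℤ) : XC D m n ⟶ XC D (m - 1) n :=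
  strandMap _ _ _ _ _ _ _ _
    (fun i => if m ≤ i ∧ i ≤ n then D.e 0 else 0)
    (by
      intro i
      try dsimp only
      by_cases h : m ≤ i ∧ i ≤ n
      · rw [if_pos h, if_pos (show m - 1 ≤ i ∧ i ≤ n by omega)]
        exact e_mul_e D 0
      · rw [if_neg h, zero_mul])
    (by
      intro i
      try dsimp only
      by_cases h : m ≤ i ∧ i < n
      · rw [if_pos h, if_pos (show m ≤ i + 1 ∧ i + 1 ≤ n by omega),
          if_pos (show m ≤ i ∧ i ≤ n by omega), if_pos (show m - 1 ≤ i ∧ i < n by omega),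
          cyc_mul_e D, e_mul_cyc D]
      · rw [if_neg h, zero_mul]
        by_cases h2 : m ≤ i ∧ i ≤ n
        · rw [if_pos h2, if_neg (show ¬ (m - 1 ≤ i ∧ i < n) by omega), mul_zero]
        · rw [if_neg h2, zero_mul])

/-- The canonical inclusion `X_{m,n} → L_{m−1,n,a}`. -/
noncomputable def incXLC (m n : ℤ) (a : ℕ) (ha : 1 ≤ a) : XC D m n ⟶ LC D (m - 1) n a ha :=
  strandMap _ _ _ _ _ _ _ _
    (fun i => if m ≤ i ∧ i ≤ n then D.e 0 else 0)
    (by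
      intro i
      try dsimp only
      by_cases h : m ≤ i ∧ i ≤ n
      · rw [if_pos h, if_neg (show ¬ (i = m - 1) by omega),
          if_pos (show m - 1 < i ∧ i ≤ n by omega)]
        exact e_mul_e D 0
      · rw [if_neg h, zero_mul])
    (by
      intro i
      try dsimp only
      by_cases h : m ≤ i ∧ i < n
      · rw [if_pos h, if_pos (show m ≤ i + 1 ∧ i + 1 ≤ n by omega),
          if_pos (show m ≤ i ∧ i ≤ n by omega),
          if_neg (show ¬ (i = m - 1 ∧ m - 1 < n) by omega),
          if_pos (show m - 1 < i ∧ i < n by omega), cyc_mul_e D, e_mul_cyc D]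
      · rw [if_neg h, zero_mul]
        by_cases h2 : m ≤ i ∧ i ≤ n
        · rw [if_pos h2, if_neg (show ¬ (i = m - 1 ∧ m - 1 < n) by omega),
            if_neg (show ¬ (m - 1 < i ∧ i < n) by omega), mul_zero]
        · rw [if_neg h2, zero_mul])

/-- The canonical inclusion `R_{m,n,b} → R_{m−1,n,b}`. -/
noncomputable def incRC (m n : ℤ) (b : ℕ) (hb : b < N) :
    RC D m n b hb ⟶ RC D (m - 1) n b hb :=
  strandMap _ _ _ _ _ _ _ _
    (fun i => if m ≤ i ∧ i < n then D.e 0 else if i = n ∧ m ≤ n then D.e (b : ZMod N) else 0)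
    (by
      intro i
      try dsimp only
      by_cases h : m ≤ i ∧ i < n
      · rw [if_pos h, if_pos (show m - 1 ≤ i ∧ i < n by omega)]
        exact e_mul_e D 0
      · by_cases h2 : i = n ∧ m ≤ n
        · rw [if_neg h, if_pos h2, if_neg (show ¬ (m - 1 ≤ i ∧ i < n) by omega),
            if_pos (show i = n by omega)]
          exact e_mul_e D (b : ZMod N)
        · rw [if_neg h, if_neg h2, zero_mul])
    (by
      intro i
      try dsimp only
      by_cases h1 : m ≤ i ∧ i + 1 < n
      · rw [if_pos h1, if_pos (show m ≤ i + 1 ∧ i + 1 < n by omega),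
          if_pos (show m ≤ i ∧ i < n by omega),
          if_pos (show m - 1 ≤ i ∧ i + 1 < n by omega), cyc_mul_e D, e_mul_cyc D]
      · by_cases h2 : m ≤ i ∧ i + 1 = n
        · rw [if_neg h1, if_pos h2, if_neg (show ¬ (m ≤ i + 1 ∧ i + 1 < n) by omega),
            if_pos (show i + 1 = n ∧ m ≤ n by omega),
            if_pos (show m ≤ i ∧ i < n by omega),
            if_neg (show ¬ (m - 1 ≤ i ∧ i + 1 < n) by omega),
            if_pos (show m - 1 ≤ i ∧ i + 1 = n by omega),
            fromP_mul_e D b, e_mul_fromP D (le_of_lt hb)]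
        · rw [if_neg h1, if_neg h2, zero_mul]
          by_cases h3 : m ≤ i ∧ i < n
          · exact absurd h3 (by omega)
          · by_cases h4 : i = n ∧ m ≤ n
            · rw [if_neg h3, if_pos h4, if_neg (show ¬ (m - 1 ≤ i ∧ i + 1 < n) by omega),
                if_neg (show ¬ (m - 1 ≤ i ∧ i + 1 = n) by omega), mul_zero]
            · rw [if_neg h3, if_neg h4, zero_mul])

/-- The canonical inclusion `R_{m,n,b} → B_{m−1,n,a,b}` (for `m < n`). -/
noncomputable def incRBC (m n : ℤ) (hmn : m < n) (a b : ℕ) (ha : 1 ≤ a) (hb : b < N) :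
    RC D m n b hb ⟶ BC D (m - 1) n a b ha hb :=
  strandMap _ _ _ _ _ _ _ _
    (fun i => if m ≤ i ∧ i < n then D.e 0 else if i = n then D.e (b : ZMod N) else 0)
    (by
      intro i
      try dsimp only
      by_cases h : m ≤ i ∧ i < n
      · rw [if_pos h, if_neg (show ¬ (i = m - 1) by omega),
          if_pos (show m - 1 < i ∧ i < n by omega)]
        exact e_mul_e D 0
      · by_cases h2 : i = n
        · rw [if_neg h, if_pos h2, if_neg (show ¬ (i = m - 1) by omega),
            if_neg (show ¬ (m - 1 < i ∧ i < n) by omega)]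
          exact e_mul_e D (b : ZMod N)
        · rw [if_neg h, if_neg h2, zero_mul])
    (by
      intro i
      try dsimp only
      by_cases h1 : m ≤ i ∧ i + 1 < n
      · rw [if_pos h1, if_pos (show m ≤ i + 1 ∧ i + 1 < n by omega),
          if_pos (show m ≤ i ∧ i < n by omega),
          if_neg (show ¬ (i = m - 1 ∧ m - 1 + 1 < n) by omega),
          if_neg (show ¬ (i = m - 1 ∧ m - 1 + 1 = n) by omega),
          if_pos (show m - 1 < i ∧ i + 1 < n by omega), cyc_mul_e D, e_mul_cyc D]
      · by_cases h2 : m ≤ i ∧ i + 1 = n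
        · rw [if_neg h1, if_pos h2, if_neg (show ¬ (m ≤ i + 1 ∧ i + 1 < n) by omega),
            if_pos (show i + 1 = n by omega),
            if_pos (show m ≤ i ∧ i < n by omega),
            if_neg (show ¬ (i = m - 1 ∧ m - 1 + 1 < n) by omega),
            if_neg (show ¬ (i = m - 1 ∧ m - 1 + 1 = n) by omega),
            if_neg (show ¬ (m - 1 < i ∧ i + 1 < n) by omega),
            if_pos (show m - 1 < i ∧ i + 1 = n by omega),
            fromP_mul_e D b, e_mul_fromP D (le_of_lt hb)]
        · rw [if_neg h1, if_neg h2, zero_mul]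
          by_cases h3 : m ≤ i ∧ i < n
          · exact absurd h3 (by omega)
          · by_cases h4 : i = n
            · rw [if_neg h3, if_pos h4,
                if_neg (show ¬ (i = m - 1 ∧ m - 1 + 1 < n) by omega),
                if_neg (show ¬ (i = m - 1 ∧ m - 1 + 1 = n) by omega),
                if_neg (show ¬ (m - 1 < i ∧ i + 1 < n) by omega),
                if_neg (show ¬ (m - 1 < i ∧ i + 1 = n) by omega), mul_zero]
            · rw [if_neg h3, if_neg h4, zero_mul])

/-- The canonical inclusion `L_{m,m,b} → Z_{m−1,a,b}` (for `b < a`). -/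
noncomputable def incLZC (m : ℤ) (a b : ℕ) (hb : 1 ≤ b) :
    LC D m m b hb ⟶ ZC D (m - 1) a b :=
  strandMap _ _ _ _ _ _ _ _
    (fun i => if i = m then D.e (b : ZMod N) else 0)
    (by
      intro i
      try dsimp only
      by_cases h : i = m
      · rw [if_pos h, if_neg (show ¬ (i = m - 1) by omega),
          if_pos (show i = m - 1 + 1 by omega)]
        exact e_mul_e D (b : ZMod N)
      · rw [if_neg h, zero_mul])
    (by
      intro i
      try dsimp only
      rw [if_neg (show ¬ (i = m ∧ m < m) by omega),
        if_neg (show ¬ (m < i ∧ i < m) by omega), zero_mul]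
      by_cases h : i = m
      · rw [if_pos h, if_neg (show ¬ (i = m - 1) by omega), mul_zero]
      · rw [if_neg h, zero_mul])

/-- The canonical projection `X_{m,n} → X_{m,n−1}`. -/
noncomputable def prXC (m n : ℤ) : XC D m n ⟶ XC D m (n - 1) :=
  strandMap _ _ _ _ _ _ _ _
    (fun i => if m ≤ i ∧ i ≤ n - 1 then D.e 0 else 0)
    (by
      intro i
      try dsimp only
      by_cases h : m ≤ i ∧ i ≤ n - 1
      · rw [if_pos h]
        exact e_mul_e D 0
      · rw [if_neg h, zero_mul])
    (by
      intro i
      try dsimp only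
      by_cases h : m ≤ i ∧ i < n - 1
      · rw [if_pos (show m ≤ i ∧ i < n by omega),
          if_pos (show m ≤ i + 1 ∧ i + 1 ≤ n - 1 by omega),
          if_pos (show m ≤ i ∧ i ≤ n - 1 by omega), if_pos h, cyc_mul_e D, e_mul_cyc D]
      · by_cases h2 : m ≤ i ∧ i < n
        · rw [if_pos h2, if_neg (show ¬ (m ≤ i + 1 ∧ i + 1 ≤ n - 1) by omega), mul_zero,
            if_pos (show m ≤ i ∧ i ≤ n - 1 by omega), if_neg h, mul_zero]
        · rw [if_neg h2, zero_mul]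
          by_cases h3 : m ≤ i ∧ i ≤ n - 1
          · exact absurd h3 (by omega)
          · rw [if_neg h3, zero_mul])

/-- The canonical projection `L_{m,n,a} → L_{m,n−1,a}`. -/
noncomputable def prLC (m n : ℤ) (a : ℕ) (ha : 1 ≤ a) : LC D m n a ha ⟶ LC D m (n - 1) a ha :=
  strandMap _ _ _ _ _ _ _ _
    (fun i => if i = m then D.e (a : ZMod N) else if m < i ∧ i ≤ n - 1 then D.e 0 else 0)
    (by
      intro i
      try dsimp only
      by_cases h : i = m
      · rw [if_pos h]
        exact e_mul_e D (a : ZMod N)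
      · by_cases h2 : m < i ∧ i ≤ n - 1
        · rw [if_neg h, if_pos h2]
          exact e_mul_e D 0
        · rw [if_neg h, if_neg h2, zero_mul])
    (by
      intro i
      try dsimp only
      by_cases h1 : i = m ∧ m < n - 1
      · rw [if_pos (show i = m ∧ m < n by omega),
          if_neg (show ¬ (i + 1 = m) by omega),
          if_pos (show m < i + 1 ∧ i + 1 ≤ n - 1 by omega),
          if_pos (show i = m by omega), if_pos h1, toP_mul_e D a, e_mul_toP D a]
      · by_cases h1' : i = m ∧ m + 1 = n
        · rw [if_pos (show i = m ∧ m < n by omega),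
            if_neg (show ¬ (i + 1 = m) by omega),
            if_neg (show ¬ (m < i + 1 ∧ i + 1 ≤ n - 1) by omega), mul_zero,
            if_pos (show i = m by omega),
            if_neg (show ¬ (i = m ∧ m < n - 1) by omega),
            if_neg (show ¬ (m < i ∧ i < n - 1) by omega), mul_zero]
        · by_cases h2 : m < i ∧ i < n - 1
          · rw [if_neg (show ¬ (i = m ∧ m < n) by omega),
              if_pos (show m < i ∧ i < n by omega),
              if_neg (show ¬ (i + 1 = m) by omega),
              if_pos (show m < i + 1 ∧ i + 1 ≤ n - 1 by omega),
              if_neg (show ¬ (i = m) by omega),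
              if_pos (show m < i ∧ i ≤ n - 1 by omega),
              if_neg (show ¬ (i = m ∧ m < n - 1) by omega),
              if_pos h2, cyc_mul_e D, e_mul_cyc D]
          · by_cases h3 : m < i ∧ i + 1 = n
            · rw [if_neg (show ¬ (i = m ∧ m < n) by omega),
                if_pos (show m < i ∧ i < n by omega),
                if_neg (show ¬ (i + 1 = m) by omega),
                if_neg (show ¬ (m < i + 1 ∧ i + 1 ≤ n - 1) by omega), mul_zero,
                if_neg (show ¬ (i = m) by omega),
                if_pos (show m < i ∧ i ≤ n - 1 by omega),
                if_neg (show ¬ (i = m ∧ m < n - 1) by omega),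
                if_neg (show ¬ (m < i ∧ i < n - 1) by omega), mul_zero]
            · rw [if_neg (show ¬ (i = m ∧ m < n) by omega),
                if_neg (show ¬ (m < i ∧ i < n) by omega), zero_mul]
              by_cases h4 : i = m
              · rw [if_pos h4, if_neg (show ¬ (i = m ∧ m < n - 1) by omega),
                  if_neg (show ¬ (m < i ∧ i < n - 1) by omega), mul_zero]
              · by_cases h5 : m < i ∧ i ≤ n - 1
                · exact absurd h5 (by omega)
                · rw [if_neg h4, if_neg h5, zero_mul])

/-- The canonical projection `R_{m,n,b} → X_{m,n−1}` (for `m < n`). -/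
noncomputable def prRXC (m n : ℤ) (hmn : m < n) (b : ℕ) (hb : b < N) :
    RC D m n b hb ⟶ XC D m (n - 1) :=
  strandMap _ _ _ _ _ _ _ _
    (fun i => if m ≤ i ∧ i ≤ n - 1 then D.e 0 else 0)
    (by
      intro i
      try dsimp only
      by_cases h : m ≤ i ∧ i ≤ n - 1
      · rw [if_pos h]
        exact e_mul_e D 0
      · rw [if_neg h, zero_mul])
    (by
      intro i
      try dsimp only
      by_cases h1 : m ≤ i ∧ i + 1 < n
      · rw [if_pos h1, if_pos (show m ≤ i + 1 ∧ i + 1 ≤ n - 1 by omega),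
          if_pos (show m ≤ i ∧ i ≤ n - 1 by omega),
          if_pos (show m ≤ i ∧ i < n - 1 by omega), cyc_mul_e D, e_mul_cyc D]
      · by_cases h2 : m ≤ i ∧ i + 1 = n
        · rw [if_neg h1, if_pos h2, if_neg (show ¬ (m ≤ i + 1 ∧ i + 1 ≤ n - 1) by omega),
            mul_zero, if_pos (show m ≤ i ∧ i ≤ n - 1 by omega),
            if_neg (show ¬ (m ≤ i ∧ i < n - 1) by omega), mul_zero]
        · rw [if_neg h1, if_neg h2, zero_mul]
          by_cases h3 : m ≤ i ∧ i ≤ n - 1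
          · exact absurd h3 (by omega)
          · rw [if_neg h3, zero_mul])

/-- The canonical projection `B_{m,n,a,b} → L_{m,n−1,a}` (for `m + 2 ≤ n`). -/
noncomputable def prBLC (m n : ℤ) (hmn : m + 2 ≤ n) (a b : ℕ) (ha : 1 ≤ a) (hb : b < N) :
    BC D m n a b ha hb ⟶ LC D m (n - 1) a ha :=
  strandMap _ _ _ _ _ _ _ _
    (fun i => if i = m then D.e (a : ZMod N) else if m < i ∧ i ≤ n - 1 then D.e 0 else 0)
    (by
      intro i
      try dsimp only
      by_cases h : i = m
      · rw [if_pos h]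
        exact e_mul_e D (a : ZMod N)
      · by_cases h2 : m < i ∧ i ≤ n - 1
        · rw [if_neg h, if_pos h2]
          exact e_mul_e D 0
        · rw [if_neg h, if_neg h2, zero_mul])
    (by
      intro i
      try dsimp only
      by_cases h1 : i = m
      · rw [if_pos (show i = m ∧ m + 1 < n by omega),
          if_neg (show ¬ (i + 1 = m) by omega),
          if_pos (show m < i + 1 ∧ i + 1 ≤ n - 1 by omega),
          if_pos h1, if_pos (show i = m ∧ m < n - 1 by omega),
          toP_mul_e D a, e_mul_toP D a]
      · by_cases h2 : m < i ∧ i + 1 < n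
        · rw [if_neg (show ¬ (i = m ∧ m + 1 < n) by omega),
            if_neg (show ¬ (i = m ∧ m + 1 = n) by omega),
            if_pos h2, if_neg (show ¬ (i + 1 = m) by omega),
            if_pos (show m < i + 1 ∧ i + 1 ≤ n - 1 by omega),
            if_neg h1, if_pos (show m < i ∧ i ≤ n - 1 by omega),
            if_neg (show ¬ (i = m ∧ m < n - 1) by omega),
            if_pos (show m < i ∧ i < n - 1 by omega), cyc_mul_e D, e_mul_cyc D]
        · by_cases h3 : m < i ∧ i + 1 = n
          · rw [if_neg (show ¬ (i = m ∧ m + 1 < n) by omega),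
              if_neg (show ¬ (i = m ∧ m + 1 = n) by omega),
              if_neg h2, if_pos h3, if_neg (show ¬ (i + 1 = m) by omega),
              if_neg (show ¬ (m < i + 1 ∧ i + 1 ≤ n - 1) by omega), mul_zero,
              if_neg h1, if_pos (show m < i ∧ i ≤ n - 1 by omega),
              if_neg (show ¬ (i = m ∧ m < n - 1) by omega),
              if_neg (show ¬ (m < i ∧ i < n - 1) by omega), mul_zero]
          · rw [if_neg (show ¬ (i = m ∧ m + 1 < n) by omega),
              if_neg (show ¬ (i = m ∧ m + 1 = n) by omega),
              if_neg h2, if_neg h3, zero_mul, if_neg h1]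
            by_cases h4 : m < i ∧ i ≤ n - 1
            · exact absurd h4 (by omega)
            · rw [if_neg h4, zero_mul])

/-- The canonical projection `Z_{m,a,b} → L_{m,m,a}`. -/
noncomputable def prZLC (m : ℤ) (a b : ℕ) (ha : 1 ≤ a) :
    ZC D m a b ⟶ LC D m m a ha :=
  strandMap _ _ _ _ _ _ _ _
    (fun i => if i = m then D.e (a : ZMod N) else 0)
    (by
      intro i
      try dsimp only
      by_cases h : i = m
      · rw [if_pos h, if_pos h]
        exact e_mul_e D (a : ZMod N)
      · rw [if_neg h, zero_mul])
    (by
      intro i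
      try dsimp only
      rw [if_neg (show ¬ (i = m ∧ m < m) by omega),
        if_neg (show ¬ (m < i ∧ i < m) by omega), mul_zero]
      by_cases h : i = m
      · rw [if_pos h, if_neg (show ¬ (i + 1 = m) by omega), mul_zero]
      · rw [if_neg h, zero_mul])

end Generators

end PaperCZ

namespace PaperCZ

section IncProj

variable {N : ℕ} [NeZero N] {A : Type*} [Ring A]
variable (D : CyclicNakayamaData N 1 A)

/-- The class of inclusions: compositions of the canonical inclusion chain maps. -/
inductive IsInclusion : ∀ {I J : LamIdx N}, (Kob D I ⟶ Kob D J) → Prop where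
  | id : ∀ I : LamIdx N, IsInclusion (𝟙 (Kob D I))
  | incX : ∀ (m n : ℤ) (h : m ≤ n) (h' : m - 1 ≤ n),
      IsInclusion (I := .X m n h) (J := .X (m - 1) n h')
        ((HomotopyCategory.quotient (ModuleCat A) (ComplexShape.up ℤ)).map (incXC D m n))
  | incXL : ∀ (m n : ℤ) (h : m ≤ n) (h' : m - 1 ≤ n) (a : ℕ) (ha : 1 ≤ a) (haN : a < N),
      IsInclusion (I := .X m n h) (J := .L (m - 1) n h' a ha haN)
        ((HomotopyCategory.quotient (ModuleCat A) (ComplexShape.up ℤ)).map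
          (incXLC D m n a ha))
  | incR : ∀ (m n : ℤ) (h : m ≤ n) (h' : m - 1 ≤ n) (b : ℕ) (hb : 1 ≤ b) (hbN : b < N),
      IsInclusion (I := .R m n h b hb hbN) (J := .R (m - 1) n h' b hb hbN)
        ((HomotopyCategory.quotient (ModuleCat A) (ComplexShape.up ℤ)).map
          (incRC D m n b hbN))
  | incRB : ∀ (m n : ℤ) (hmn : m < n) (h : m ≤ n) (h' : m - 1 + 2 ≤ n) (a b : ℕ)
      (ha : 1 ≤ a) (haN : a < N) (hb : 1 ≤ b) (hbN : b < N),
      IsInclusion (I := .R m n h b hb hbN) (J := .B (m - 1) n h' a b ha haN hb hbN)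
        ((HomotopyCategory.quotient (ModuleCat A) (ComplexShape.up ℤ)).map
          (incRBC D m n hmn a b ha hbN))
  | incLZ : ∀ (m : ℤ) (a b : ℕ) (hb : 1 ≤ b) (hba : b < a) (haN : a < N),
      IsInclusion (I := .L m m (le_refl m) b hb (Nat.lt_trans hba haN))
        (J := .Z (m - 1) a b hb hba haN)
        ((HomotopyCategory.quotient (ModuleCat A) (ComplexShape.up ℤ)).map
          (incLZC D m a b hb))
  | comp : ∀ {I J K : LamIdx N} (f : Kob D I ⟶ Kob D J) (g : Kob D J ⟶ Kob D K),
      IsInclusion f → IsInclusion g → IsInclusion (f ≫ g)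

/-- The class of projections: compositions of the canonical projection chain maps. -/
inductive IsProjection : ∀ {I J : LamIdx N}, (Kob D I ⟶ Kob D J) → Prop where
  | id : ∀ I : LamIdx N, IsProjection (𝟙 (Kob D I))
  | prX : ∀ (m n : ℤ) (h : m ≤ n) (h' : m ≤ n - 1),
      IsProjection (I := .X m n h) (J := .X m (n - 1) h')
        ((HomotopyCategory.quotient (ModuleCat A) (ComplexShape.up ℤ)).map (prXC D m n))
  | prL : ∀ (m n : ℤ) (h : m ≤ n) (h' : m ≤ n - 1) (a : ℕ) (ha : 1 ≤ a) (haN : a < N),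
      IsProjection (I := .L m n h a ha haN) (J := .L m (n - 1) h' a ha haN)
        ((HomotopyCategory.quotient (ModuleCat A) (ComplexShape.up ℤ)).map
          (prLC D m n a ha))
  | prRX : ∀ (m n : ℤ) (hmn : m < n) (h : m ≤ n) (h' : m ≤ n - 1) (b : ℕ)
      (hb : 1 ≤ b) (hbN : b < N),
      IsProjection (I := .R m n h b hb hbN) (J := .X m (n - 1) h')
        ((HomotopyCategory.quotient (ModuleCat A) (ComplexShape.up ℤ)).map
          (prRXC D m n hmn b hbN))
  | prBL : ∀ (m n : ℤ) (hmn : m + 2 ≤ n) (h' : m ≤ n - 1) (a b : ℕ)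
      (ha : 1 ≤ a) (haN : a < N) (hb : 1 ≤ b) (hbN : b < N),
      IsProjection (I := .B m n hmn a b ha haN hb hbN) (J := .L m (n - 1) h' a ha haN)
        ((HomotopyCategory.quotient (ModuleCat A) (ComplexShape.up ℤ)).map
          (prBLC D m n hmn a b ha hbN))
  | prZL : ∀ (m : ℤ) (a b : ℕ) (hb : 1 ≤ b) (hba : b < a) (haN : a < N),
      IsProjection (I := .Z m a b hb hba haN)
        (J := .L m m (le_refl m) a (by omega) haN)
        ((HomotopyCategory.quotient (ModuleCat A) (ComplexShape.up ℤ)).map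
          (prZLC D m a b (by omega)))
  | comp : ∀ {I J K : LamIdx N} (f : Kob D I ⟶ Kob D J) (g : Kob D J ⟶ Kob D K),
      IsProjection f → IsProjection g → IsProjection (f ≫ g)

/-- A pair of supports `([m,n], [p,q])` is crossing when `m ≤ p ≤ n ≤ q`. -/
def CrossingPair (I J : LamIdx N) : Prop := I.lo ≤ J.lo ∧ J.lo ≤ I.hi ∧ I.hi ≤ J.hi

/-- A nonzero morphism `f : X → Y` in the homotopy category (with `supp X = [m,n]`,
`supp Y = [p,q]`) is crossing if every chain map representing its homotopy class is
nonzero in degree `n` and in degree `p`. -/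
def IsCrossingMor {I J : LamIdx N} (f : Kob D I ⟶ Kob D J) : Prop :=
  f ≠ 0 ∧ ∀ g : I.toCplx D ⟶ J.toCplx D,
    (HomotopyCategory.quotient (ModuleCat A) (ComplexShape.up ℤ)).map g = f →
      g.f I.hi ≠ 0 ∧ g.f J.lo ≠ 0

end IncProj

end PaperCZ


namespace PaperCZ

section NewInfra

variable {A : Type*} [Ring A]

-- NEW infrastructure

instance : Subsingleton (emod A (0 : A)) := by
  constructor
  rintro ⟨x, hx⟩ ⟨y, hy⟩
  apply Subtype.ext
  change x * 0 = x at hx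
  change y * 0 = y at hy
  rw [mul_zero] at hx hy
  show x = y
  rw [← hx, ← hy]

instance : Subsingleton (PM A (0 : A)) :=
  inferInstanceAs (Subsingleton (emod A (0 : A)))

lemma PM_subsing {x : A} (h : x = 0) : Subsingleton (PM A x) := by
  rw [h]; infer_instance

lemma hom_from_subsing {M N : ModuleCat A} (h : Subsingleton M) (f : M ⟶ N) : f = 0 := by
  ext x
  rw [Subsingleton.elim x 0]
  simp

lemma hom_ext_to_subsing {M N : ModuleCat A} (h : Subsingleton N) (f g : M ⟶ N) : f = g := by
  ext x
  exact h.elim _ _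

lemma strand_subsing {ε p : ℤ → A} {hp : ∀ i, p i * ε (i + 1) = p i}
    {hsq : ∀ i, p i * p (i + 1) = 0} (j : ℤ) (h : ε j = 0) :
    Subsingleton ((strand ε p hp hsq).X j) :=
  PM_subsing h

lemma strand_d {ε p : ℤ → A} {hp : ∀ i, p i * ε (i + 1) = p i}
    {hsq : ∀ i, p i * p (i + 1) = 0} (i : ℤ) :
    (strand ε p hp hsq).d i (i + 1) = rmul (ε i) (hp i) :=
  by dsimp only [strand]; rw [CochainComplex.of_d]

lemma strandMap_f (ε p : ℤ → A) (hp : ∀ i, p i * ε (i + 1) = p i)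
    (hsq : ∀ i, p i * p (i + 1) = 0)
    (ε' p' : ℤ → A) (hp' : ∀ i, p' i * ε' (i + 1) = p' i)
    (hsq' : ∀ i, p' i * p' (i + 1) = 0)
    (q : ℤ → A) (hq : ∀ i, q i * ε' i = q i)
    (hcomm : ∀ i, p i * q (i + 1) = q i * p' i) (i : ℤ) :
    (strandMap ε p hp hsq ε' p' hp' hsq' q hq hcomm).f i = rmul (ε i) (hq i) := rfl



section Factor

variable {A : Type*} [Ring A]

/-- Transport along an equality of idempotents. -/
def trPM {x y : A} (h : x = y) : PM A x ⟶ PM A y :=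
  ModuleCat.ofHom (X := emod A x) (Y := emod A y)
    { toFun := fun v => ⟨v.1, by rw [← h]; exact v.2⟩
      map_add' := fun v w => rfl
      map_smul' := fun a v => rfl }

lemma factor_proj {ε p : ℤ → A} {hp : ∀ i, p i * ε (i + 1) = p i}
    {hsq : ∀ i, p i * p (i + 1) = 0}
    {ε' p' : ℤ → A} {hp' : ∀ i, p' i * ε' (i + 1) = p' i}
    {hsq' : ∀ i, p' i * p' (i + 1) = 0}
    {q : ℤ → A} {hq : ∀ i, q i * ε' i = q i}
    {hcomm : ∀ i, p i * q (i + 1) = q i * p' i}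
    (M : ℤ → Prop)
    (hM1 : ∀ j, M j → ε' j = ε j)
    (hM2 : ∀ j, ¬ M j → ε' j = 0)
    (hqM : ∀ j, M j → q j = ε j)
    (hpM : ∀ j, M j → M (j + 1) → p' j = p j)
    {Y : CochainComplex (ModuleCat A) ℤ}
    (g : strand ε p hp hsq ⟶ Y)
    (hg : ∀ j, ¬ M j → g.f j = 0) :
    ∃ g' : strand ε' p' hp' hsq' ⟶ Y,
      strandMap ε p hp hsq ε' p' hp' hsq' q hq hcomm ≫ g' = g := by
  classical
  refine ⟨{ f := fun j => if h : M j then trPM (hM1 j h) ≫ g.f j else 0,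
            comm' := ?_ }, ?_⟩
  · intro i j hij
    simp only [ComplexShape.up_Rel] at hij
    subst hij
    try dsimp only
    by_cases hi : M i
    · rw [dif_pos hi]
      have hgc := g.comm i (i + 1)
      rw [strand_d] at hgc
      rw [strand_d]
      by_cases hi1 : M (i + 1)
      · rw [dif_pos hi1]
        have e1 : rmul (ε' i) (hp' i) ≫ trPM (hM1 (i+1) hi1)
            = trPM (hM1 i hi) ≫ rmul (ε i) (hp i) := by
          ext x
          apply Subtype.ext
          show x.1 * p' i = x.1 * p i
          rw [hpM i hi hi1]
        calc (trPM (hM1 i hi) ≫ g.f i) ≫ Y.d i (i+1)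
            = trPM (hM1 i hi) ≫ (g.f i ≫ Y.d i (i+1)) := by erw [Category.assoc]
          _ = trPM (hM1 i hi) ≫ (rmul (ε i) (hp i) ≫ g.f (i+1)) := by erw [hgc]; rfl
          _ = (trPM (hM1 i hi) ≫ rmul (ε i) (hp i)) ≫ g.f (i+1) := by
              erw [Category.assoc]
          _ = (rmul (ε' i) (hp' i) ≫ trPM (hM1 (i+1) hi1)) ≫ g.f (i+1) := by erw [e1]
          _ = rmul (ε' i) (hp' i) ≫ (trPM (hM1 (i+1) hi1) ≫ g.f (i+1)) := by
              erw [Category.assoc]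
      · erw [dif_neg hi1, comp_zero, Category.assoc, hgc, ← Category.assoc,
          hg (i+1) hi1, comp_zero]
    · rw [dif_neg hi, zero_comp]
      haveI : Subsingleton ((strand ε' p' hp' hsq').X i) := strand_subsing i (hM2 i hi)
      rw [hom_from_subsing this ((strand ε' p' hp' hsq').d i (i+1)), zero_comp]
  · apply HomologicalComplex.hom_ext
    intro j
    rw [HomologicalComplex.comp_f]
    dsimp only
    by_cases hj : M j
    · rw [dif_pos hj, strandMap_f]
      have e : rmul (ε j) (hq j) ≫ trPM (hM1 j hj) = 𝟙 _ := by
        ext x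
        apply Subtype.ext
        show x.1 * q j = x.1
        rw [hqM j hj]
        exact x.2
      erw [← Category.assoc, e]
      exact Category.id_comp _
    · rw [dif_neg hj, comp_zero, hg j hj]

lemma factor_inc {ε p : ℤ → A} {hp : ∀ i, p i * ε (i + 1) = p i}
    {hsq : ∀ i, p i * p (i + 1) = 0}
    {ε' p' : ℤ → A} {hp' : ∀ i, p' i * ε' (i + 1) = p' i}
    {hsq' : ∀ i, p' i * p' (i + 1) = 0}
    {q : ℤ → A} {hq : ∀ i, q i * ε i = q i}
    {hcomm : ∀ i, p' i * q (i + 1) = q i * p i}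
    (M : ℤ → Prop)
    (hM1 : ∀ j, M j → ε' j = ε j)
    (hM2 : ∀ j, ¬ M j → ε' j = 0)
    (hqM : ∀ j, M j → q j = ε' j)
    (hpM : ∀ j, M j → M (j + 1) → p' j = p j)
    {W : CochainComplex (ModuleCat A) ℤ}
    (g : W ⟶ strand ε p hp hsq)
    (hg : ∀ j, ¬ M j → g.f j = 0) :
    ∃ g' : W ⟶ strand ε' p' hp' hsq',
      g' ≫ strandMap ε' p' hp' hsq' ε p hp hsq q hq hcomm = g := by
  classical
  refine ⟨{ f := fun j => if h : M j then g.f j ≫ trPM (hM1 j h).symm else 0,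
            comm' := ?_ }, ?_⟩
  · intro i j hij
    simp only [ComplexShape.up_Rel] at hij
    subst hij
    try dsimp only
    by_cases hi1 : M (i + 1)
    · have hgc := g.comm i (i + 1)
      rw [strand_d] at hgc
      rw [strand_d]
      by_cases hi : M i
      · rw [dif_pos hi, dif_pos hi1]
        have e1 : trPM (hM1 i hi).symm ≫ rmul (ε' i) (hp' i)
            = rmul (ε i) (hp i) ≫ trPM (hM1 (i+1) hi1).symm := by
          ext x
          apply Subtype.ext
          show x.1 * p' i = x.1 * p i
          rw [hpM i hi hi1]
        calc (g.f i ≫ trPM (hM1 i hi).symm) ≫ rmul (ε' i) (hp' i)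
            = g.f i ≫ (trPM (hM1 i hi).symm ≫ rmul (ε' i) (hp' i)) := by
              erw [Category.assoc]
          _ = g.f i ≫ (rmul (ε i) (hp i) ≫ trPM (hM1 (i+1) hi1).symm) := by erw [e1]; rfl
          _ = (g.f i ≫ rmul (ε i) (hp i)) ≫ trPM (hM1 (i+1) hi1).symm := by
              erw [Category.assoc]
          _ = (W.d i (i+1) ≫ g.f (i+1)) ≫ trPM (hM1 (i+1) hi1).symm := by erw [hgc]; rfl
          _ = W.d i (i+1) ≫ (g.f (i+1) ≫ trPM (hM1 (i+1) hi1).symm) := by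
              erw [Category.assoc]
      · erw [dif_neg hi, dif_pos hi1, zero_comp, ← Category.assoc, ← hgc,
          hg i hi, zero_comp, zero_comp]
    · haveI : Subsingleton ((strand ε' p' hp' hsq').X (i+1)) :=
        strand_subsing (i+1) (hM2 (i+1) hi1)
      exact hom_ext_to_subsing this _ _
  · apply HomologicalComplex.hom_ext
    intro j
    rw [HomologicalComplex.comp_f]
    dsimp only
    by_cases hj : M j
    · rw [dif_pos hj, strandMap_f]
      have e : trPM (hM1 j hj).symm ≫ rmul (ε' j) (hq j) = 𝟙 _ := by
        ext x
        apply Subtype.ext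
        show x.1 * q j = x.1
        rw [hqM j hj, hM1 j hj]
        exact x.2
      erw [Category.assoc, e]
      exact Category.comp_id _
    · rw [dif_neg hj, zero_comp]
      exact (hg j hj).symm

end Factor

end NewInfra

end PaperCZ

namespace PaperCZ

section Shapes

variable {N : ℕ} [NeZero N] {A : Type*} [Ring A] (D : CyclicNakayamaData N 1 A)

lemma XC_subsing (m n j : ℤ) (h : ¬(m ≤ j ∧ j ≤ n)) :
    Subsingleton ((XC D m n).X j) := by
  apply strand_subsing
  exact if_neg h

lemma LC_subsing (m n : ℤ) (a : ℕ) (ha : 1 ≤ a) (j : ℤ) (h1 : j ≠ m)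
    (h2 : ¬(m < j ∧ j ≤ n)) : Subsingleton ((LC D m n a ha).X j) := by
  apply strand_subsing
  rw [if_neg h1, if_neg h2]

lemma RC_subsing (m n : ℤ) (b : ℕ) (hb : b < N) (j : ℤ) (h1 : ¬(m ≤ j ∧ j < n))
    (h2 : j ≠ n) : Subsingleton ((RC D m n b hb).X j) := by
  apply strand_subsing
  rw [if_neg h1, if_neg h2]

lemma BC_subsing (m n : ℤ) (a b : ℕ) (ha : 1 ≤ a) (hb : b < N) (j : ℤ)
    (h1 : j ≠ m) (h2 : ¬(m < j ∧ j < n)) (h3 : j ≠ n) :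
    Subsingleton ((BC D m n a b ha hb).X j) := by
  apply strand_subsing
  rw [if_neg h1, if_neg h2, if_neg h3]

lemma ZC_subsing (m : ℤ) (a b : ℕ) (j : ℤ) (h1 : j ≠ m) (h2 : j ≠ m + 1) :
    Subsingleton ((ZC D m a b).X j) := by
  apply strand_subsing
  rw [if_neg h1, if_neg h2]

lemma lo_le_hi (I : LamIdx N) : I.lo ≤ I.hi := by
  cases I <;> dsimp [LamIdx.lo, LamIdx.hi] <;> omega

lemma supp_subsing (I : LamIdx N) (j : ℤ) (h : j < I.lo ∨ I.hi < j) :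
    Subsingleton ((I.toCplx D).X j) := by
  cases I with
  | X m n hmn =>
    have h' : j < m ∨ n < j := h
    exact XC_subsing D m n j (by omega)
  | L m n hmn a ha haN =>
    have h' : j < m ∨ n < j := h
    exact LC_subsing D m n a ha j (by omega) (by omega)
  | R m n hmn b hb hbN =>
    have h' : j < m ∨ n < j := h
    exact RC_subsing D m n b hbN j (by omega) (by omega)
  | B m n hmn a b ha haN hb hbN =>
    have h' : j < m ∨ n < j := h
    exact BC_subsing D m n a b ha hbN j (by omega) (by omega) (by omega)
  | Z m a b hb hba haN =>
    have h' : j < m ∨ m + 1 < j := h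
    exact ZC_subsing D m a b j (by omega) (by omega)

lemma topRed (I : LamIdx N) (hI : I.lo < I.hi) :
    ∃ (I' : LamIdx N) (prC : I.toCplx D ⟶ I'.toCplx D),
      I'.lo = I.lo ∧ I'.hi = I.hi - 1 ∧
      IsProjection D
        ((HomotopyCategory.quotient (ModuleCat A) (ComplexShape.up ℤ)).map prC) ∧
      ∀ (Y : CochainComplex (ModuleCat A) ℤ) (g : I.toCplx D ⟶ Y),
        g.f I.hi = 0 → ∃ g', prC ≫ g' = g := by
  cases I with
  | X m n hmn =>
    have hmn' : m < n := hI
    refine ⟨.X m (n-1) (by omega), prXC D m n, rfl, rfl,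
      IsProjection.prX m n hmn (by omega), ?_⟩
    intro Y g hg
    apply factor_proj (M := fun j => m ≤ j ∧ j ≤ n - 1)
    · intro j hj
      try dsimp only
      rw [if_pos hj, if_pos (show m ≤ j ∧ j ≤ n by omega)]
    · intro j hj
      try dsimp only
      rw [if_neg hj]
    · intro j hj
      try dsimp only
      rw [if_pos hj, if_pos (show m ≤ j ∧ j ≤ n by omega)]
    · intro j hj hj1
      try dsimp only
      rw [if_pos (show m ≤ j ∧ j < n - 1 by omega),
        if_pos (show m ≤ j ∧ j < n by omega)]
    · intro j hj
      by_cases hjn : j = n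
      · subst hjn; exact hg
      · exact hom_from_subsing (XC_subsing D m n j (by omega)) _
  | L m n hmn a ha haN =>
    have hmn' : m < n := hI
    refine ⟨.L m (n-1) (by omega) a ha haN, prLC D m n a ha, rfl, rfl,
      IsProjection.prL m n hmn (by omega) a ha haN, ?_⟩
    intro Y g hg
    apply factor_proj (M := fun j => j = m ∨ (m < j ∧ j ≤ n - 1))
    · intro j hj
      try dsimp only
      rcases hj with h | h
      · rw [if_pos h, if_pos h]
      · rw [if_neg (show ¬ j = m by omega), if_pos h,
          if_neg (show ¬ j = m by omega), if_pos (show m < j ∧ j ≤ n by omega)]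
    · intro j hj
      try dsimp only
      rw [if_neg (show ¬ j = m by tauto), if_neg (show ¬ (m < j ∧ j ≤ n - 1) by tauto)]
    · intro j hj
      try dsimp only
      rcases hj with h | h
      · rw [if_pos h, if_pos h]
      · rw [if_neg (show ¬ j = m by omega), if_pos h,
          if_neg (show ¬ j = m by omega), if_pos (show m < j ∧ j ≤ n by omega)]
    · intro j hj hj1
      try dsimp only
      rcases hj with h | h
      · have h1 : m < n - 1 := by rcases hj1 with h' | h' <;> omega
        rw [if_pos (show j = m ∧ m < n - 1 by exact ⟨h, h1⟩),
          if_pos (show j = m ∧ m < n by omega)]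
      · have h1 : j < n - 1 := by rcases hj1 with h' | h' <;> omega
        rw [if_neg (show ¬ (j = m ∧ m < n - 1) by omega),
          if_pos (show m < j ∧ j < n - 1 by omega),
          if_neg (show ¬ (j = m ∧ m < n) by omega),
          if_pos (show m < j ∧ j < n by omega)]
    · intro j hj
      by_cases hjn : j = n
      · subst hjn; exact hg
      · refine hom_from_subsing (LC_subsing D m n a ha j ?_ ?_) _
        · intro h; exact hj (Or.inl h)
        · intro h; exact hj (Or.inr ⟨h.1, by omega⟩)
  | R m n hmn b hb hbN =>
    have hmn' : m < n := hI
    refine ⟨.X m (n-1) (by omega), prRXC D m n hmn' b hbN, rfl, rfl,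
      IsProjection.prRX m n hmn' hmn (by omega) b hb hbN, ?_⟩
    intro Y g hg
    apply factor_proj (M := fun j => m ≤ j ∧ j ≤ n - 1)
    · intro j hj
      try dsimp only
      rw [if_pos hj, if_pos (show m ≤ j ∧ j < n by omega)]
    · intro j hj
      try dsimp only
      rw [if_neg hj]
    · intro j hj
      try dsimp only
      rw [if_pos hj, if_pos (show m ≤ j ∧ j < n by omega)]
    · intro j hj hj1
      try dsimp only
      rw [if_pos (show m ≤ j ∧ j < n - 1 by omega),
        if_pos (show m ≤ j ∧ j + 1 < n by omega)]
    · intro j hj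
      by_cases hjn : j = n
      · subst hjn; exact hg
      · exact hom_from_subsing (RC_subsing D m n b hbN j (by omega) hjn) _
  | B m n hmn a b ha haN hb hbN =>
    refine ⟨.L m (n-1) (by omega) a ha haN, prBLC D m n hmn a b ha hbN, rfl, rfl,
      IsProjection.prBL m n hmn (by omega) a b ha haN hb hbN, ?_⟩
    intro Y g hg
    apply factor_proj (M := fun j => j = m ∨ (m < j ∧ j ≤ n - 1))
    · intro j hj
      try dsimp only
      rcases hj with h | h
      · rw [if_pos h, if_pos h]
      · rw [if_neg (show ¬ j = m by omega), if_pos h,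
          if_neg (show ¬ j = m by omega), if_pos (show m < j ∧ j < n by omega)]
    · intro j hj
      try dsimp only
      rw [if_neg (show ¬ j = m by tauto), if_neg (show ¬ (m < j ∧ j ≤ n - 1) by tauto)]
    · intro j hj
      try dsimp only
      rcases hj with h | h
      · rw [if_pos h, if_pos h]
      · rw [if_neg (show ¬ j = m by omega), if_pos h,
          if_neg (show ¬ j = m by omega), if_pos (show m < j ∧ j < n by omega)]
    · intro j hj hj1
      try dsimp only
      rcases hj with h | h
      · have h1 : m + 1 ≤ n - 1 := by rcases hj1 with h' | h' <;> omega
        rw [if_pos (show j = m ∧ m < n - 1 by omega),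
          if_pos (show j = m ∧ m + 1 < n by omega)]
      · have h1 : j + 1 ≤ n - 1 := by rcases hj1 with h' | h' <;> omega
        rw [if_neg (show ¬ (j = m ∧ m < n - 1) by omega),
          if_pos (show m < j ∧ j < n - 1 by omega),
          if_neg (show ¬ (j = m ∧ m + 1 < n) by omega),
          if_neg (show ¬ (j = m ∧ m + 1 = n) by omega),
          if_pos (show m < j ∧ j + 1 < n by omega)]
    · intro j hj
      by_cases hjn : j = n
      · subst hjn; exact hg
      · refine hom_from_subsing (BC_subsing D m n a b ha hbN j ?_ ?_ hjn) _
        · intro h; exact hj (Or.inl h)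
        · intro h; exact hj (Or.inr ⟨h.1, by omega⟩)
  | Z m a b hb hba haN =>
    refine ⟨.L m m (le_refl m) a (by omega) haN, prZLC D m a b (by omega),
      rfl, by show m = m + 1 - 1; omega, IsProjection.prZL m a b hb hba haN, ?_⟩
    intro Y g hg
    apply factor_proj (M := fun j => j = m)
    · intro j hj
      try dsimp only
      rw [if_pos hj, if_pos hj]
    · intro j hj
      try dsimp only
      rw [if_neg hj, if_neg (show ¬ (m < j ∧ j ≤ m) by omega)]
    · intro j hj
      try dsimp only
      rw [if_pos hj, if_pos hj]
    · intro j hj hj1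
      exfalso
      omega
    · intro j hj
      by_cases hjn : j = m + 1
      · subst hjn; exact hg
      · exact hom_from_subsing (ZC_subsing D m a b j hj hjn) _

lemma botRed (J : LamIdx N) (hJ : J.lo < J.hi) :
    ∃ (J' : LamIdx N) (ιC : J'.toCplx D ⟶ J.toCplx D),
      J'.lo = J.lo + 1 ∧ J'.hi = J.hi ∧
      IsInclusion D
        ((HomotopyCategory.quotient (ModuleCat A) (ComplexShape.up ℤ)).map ιC) ∧
      ∀ (W : CochainComplex (ModuleCat A) ℤ) (g : W ⟶ J.toCplx D),
        g.f J.lo = 0 → ∃ g', g' ≫ ιC = g := by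
  cases J with
  | X p q hpq =>
    obtain ⟨m, rfl⟩ : ∃ m : ℤ, p = m - 1 := ⟨p + 1, by ring⟩
    have hmq : m - 1 < q := hJ
    refine ⟨.X m q (by omega), incXC D m q, by show m = m - 1 + 1; omega, rfl,
      IsInclusion.incX m q (by omega) hpq, ?_⟩
    intro W g hg
    apply factor_inc (M := fun j => m ≤ j ∧ j ≤ q)
    · intro j hj
      try dsimp only
      rw [if_pos hj, if_pos (show m - 1 ≤ j ∧ j ≤ q by omega)]
    · intro j hj
      try dsimp only
      rw [if_neg hj]
    · intro j hj
      rfl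
    · intro j hj hj1
      try dsimp only
      rw [if_pos (show m ≤ j ∧ j < q by omega),
        if_pos (show m - 1 ≤ j ∧ j < q by omega)]
    · intro j hj
      by_cases hjm : j = m - 1
      · subst hjm; exact hg
      · exact hom_ext_to_subsing (XC_subsing D (m-1) q j (by omega)) _ _
  | L p q hpq a ha haN =>
    obtain ⟨m, rfl⟩ : ∃ m : ℤ, p = m - 1 := ⟨p + 1, by ring⟩
    have hmq : m - 1 < q := hJ
    refine ⟨.X m q (by omega), incXLC D m q a ha, by show m = m - 1 + 1; omega, rfl,
      IsInclusion.incXL m q (by omega) hpq a ha haN, ?_⟩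
    intro W g hg
    apply factor_inc (M := fun j => m ≤ j ∧ j ≤ q)
    · intro j hj
      try dsimp only
      rw [if_pos hj, if_neg (show ¬ j = m - 1 by omega),
        if_pos (show m - 1 < j ∧ j ≤ q by omega)]
    · intro j hj
      try dsimp only
      rw [if_neg hj]
    · intro j hj
      rfl
    · intro j hj hj1
      try dsimp only
      rw [if_pos (show m ≤ j ∧ j < q by omega),
        if_neg (show ¬ (j = m - 1 ∧ m - 1 < q) by omega),
        if_pos (show m - 1 < j ∧ j < q by omega)]
    · intro j hj
      by_cases hjm : j = m - 1
      · subst hjm; exact hg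
      · exact hom_ext_to_subsing
          (LC_subsing D (m-1) q a ha j hjm (by omega)) _ _
  | R p q hpq b hb hbN =>
    obtain ⟨m, rfl⟩ : ∃ m : ℤ, p = m - 1 := ⟨p + 1, by ring⟩
    have hmq : m - 1 < q := hJ
    refine ⟨.R m q (by omega) b hb hbN, incRC D m q b hbN, by show m = m - 1 + 1; omega, rfl,
      IsInclusion.incR m q (by omega) hpq b hb hbN, ?_⟩
    intro W g hg
    apply factor_inc (M := fun j => (m ≤ j ∧ j < q) ∨ j = q)
    · intro j hj
      try dsimp only
      rcases hj with h | h
      · rw [if_pos h, if_pos (show m - 1 ≤ j ∧ j < q by omega)]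
      · rw [if_neg (show ¬ (m ≤ j ∧ j < q) by omega),
          if_neg (show ¬ (m - 1 ≤ j ∧ j < q) by omega), if_pos h]
    · intro j hj
      try dsimp only
      rw [if_neg (show ¬ (m ≤ j ∧ j < q) by tauto), if_neg (show ¬ j = q by tauto)]
    · intro j hj
      try dsimp only
      rcases hj with h | h
      · rw [if_pos h, if_pos h]
      · rw [if_neg (show ¬ (m ≤ j ∧ j < q) by omega),
          if_pos (show j = q ∧ m ≤ q by omega),
          if_neg (show ¬ (m ≤ j ∧ j < q) by omega), if_pos h]
    · intro j hj hj1
      try dsimp only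
      have hjq : ¬ j = q := by
        intro h
        rcases hj1 with h' | h' <;> omega
      rcases hj with h | h
      · by_cases h2 : j + 1 < q
        · rw [if_pos (show m ≤ j ∧ j + 1 < q by omega),
            if_pos (show m - 1 ≤ j ∧ j + 1 < q by omega)]
        · rw [if_neg (show ¬ (m ≤ j ∧ j + 1 < q) by omega),
            if_pos (show m ≤ j ∧ j + 1 = q by omega),
            if_neg (show ¬ (m - 1 ≤ j ∧ j + 1 < q) by omega),
            if_pos (show m - 1 ≤ j ∧ j + 1 = q by omega)]
      · exact absurd h hjq
    · intro j hj
      by_cases hjm : j = m - 1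
      · subst hjm; exact hg
      · refine hom_ext_to_subsing (RC_subsing D (m-1) q b hbN j ?_ ?_) _ _
        · intro h; omega
        · intro h; exact hj (Or.inr h)
  | B p q hpq a b ha haN hb hbN =>
    obtain ⟨m, rfl⟩ : ∃ m : ℤ, p = m - 1 := ⟨p + 1, by ring⟩
    have hmq : m - 1 + 2 ≤ q := hpq
    refine ⟨.R m q (by omega) b hb hbN, incRBC D m q (by omega) a b ha hbN,
      by show m = m - 1 + 1; omega, rfl,
      IsInclusion.incRB m q (by omega) (by omega) hpq a b ha haN hb hbN, ?_⟩
    intro W g hg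
    apply factor_inc (M := fun j => (m ≤ j ∧ j < q) ∨ j = q)
    · intro j hj
      try dsimp only
      rcases hj with h | h
      · rw [if_pos h, if_neg (show ¬ j = m - 1 by omega),
          if_pos (show m - 1 < j ∧ j < q by omega)]
      · rw [if_neg (show ¬ (m ≤ j ∧ j < q) by omega),
          if_neg (show ¬ j = m - 1 by omega),
          if_neg (show ¬ (m - 1 < j ∧ j < q) by omega), if_pos h]
    · intro j hj
      try dsimp only
      rw [if_neg (show ¬ (m ≤ j ∧ j < q) by tauto), if_neg (show ¬ j = q by tauto)]
    · intro j hj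
      rfl
    · intro j hj hj1
      try dsimp only
      have hjq : ¬ j = q := by
        intro h
        rcases hj1 with h' | h' <;> omega
      rcases hj with h | h
      · by_cases h2 : j + 1 < q
        · rw [if_pos (show m ≤ j ∧ j + 1 < q by omega),
            if_neg (show ¬ (j = m - 1 ∧ m - 1 + 1 < q) by omega),
            if_neg (show ¬ (j = m - 1 ∧ m - 1 + 1 = q) by omega),
            if_pos (show m - 1 < j ∧ j + 1 < q by omega)]
        · rw [if_neg (show ¬ (m ≤ j ∧ j + 1 < q) by omega),
            if_pos (show m ≤ j ∧ j + 1 = q by omega),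
            if_neg (show ¬ (j = m - 1 ∧ m - 1 + 1 < q) by omega),
            if_neg (show ¬ (j = m - 1 ∧ m - 1 + 1 = q) by omega),
            if_neg (show ¬ (m - 1 < j ∧ j + 1 < q) by omega),
            if_pos (show m - 1 < j ∧ j + 1 = q by omega)]
      · exact absurd h hjq
    · intro j hj
      by_cases hjm : j = m - 1
      · subst hjm; exact hg
      · refine hom_ext_to_subsing
          (BC_subsing D (m-1) q a b ha hbN j hjm ?_ ?_) _ _
        · intro h; exact hj (Or.inl ⟨by omega, h.2⟩)
        · intro h; exact hj (Or.inr h)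
  | Z p a b hb hba haN =>
    obtain ⟨m, rfl⟩ : ∃ m : ℤ, p = m - 1 := ⟨p + 1, by ring⟩
    refine ⟨.L m m (le_refl m) b hb (Nat.lt_trans hba haN), incLZC D m a b hb,
      by show m = m - 1 + 1; omega, by show m = m - 1 + 1; omega,
      IsInclusion.incLZ m a b hb hba haN, ?_⟩
    intro W g hg
    apply factor_inc (M := fun j => j = m)
    · intro j hj
      try dsimp only
      rw [if_pos hj, if_neg (show ¬ j = m - 1 by omega),
        if_pos (show j = m - 1 + 1 by omega)]
    · intro j hj
      try dsimp only
      rw [if_neg hj, if_neg (show ¬ (m < j ∧ j ≤ m) by omega)]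
    · intro j hj
      try dsimp only
      rw [if_pos hj, if_pos hj]
    · intro j hj hj1
      exfalso
      omega
    · intro j hj
      by_cases hjm : j = m - 1
      · subst hjm; exact hg
      · exact hom_ext_to_subsing
          (ZC_subsing D (m-1) a b j hjm (show ¬ j = m - 1 + 1 by omega)) _ _

lemma rep_zero_contra {I J : LamIdx N} (hIJ : J.lo = I.hi)
    (g : I.toCplx D ⟶ J.toCplx D) (h0 : g.f I.hi = 0) : g = 0 := by
  apply HomologicalComplex.hom_ext
  intro j
  rw [HomologicalComplex.zero_f]
  rcases lt_trichotomy j I.hi with h | h | h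
  · exact hom_ext_to_subsing (supp_subsing D J j (Or.inl (by omega))) _ _
  · rw [h]; exact h0
  · exact hom_from_subsing (supp_subsing D I j (Or.inr h)) _

lemma main_aux (fuel : ℕ) :
    ∀ (I J : LamIdx N), ((I.hi - I.lo) + (J.hi - J.lo)).toNat ≤ fuel →
      CrossingPair I J → ∀ f : Kob D I ⟶ Kob D J, f ≠ 0 →
      ∃ (I' J' : LamIdx N) (pr : Kob D I ⟶ Kob D I') (inc : Kob D J' ⟶ Kob D J)
        (f' : Kob D I' ⟶ Kob D J'),
        IsProjection D pr ∧ IsInclusion D inc ∧ IsCrossingMor D f' ∧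
        f = pr ≫ f' ≫ inc := by
  induction fuel using Nat.strong_induction_on with
  | _ fuel ih =>
  intro I J hfuel hcross f hf
  by_cases hc : IsCrossingMor D f
  · exact ⟨I, J, 𝟙 _, 𝟙 _, f, IsProjection.id I, IsInclusion.id J, hc, by simp⟩
  have hnall : ¬ ∀ g : I.toCplx D ⟶ J.toCplx D,
      (HomotopyCategory.quotient (ModuleCat A) (ComplexShape.up ℤ)).map g = f →
        (g.f I.hi ≠ 0 ∧ g.f J.lo ≠ 0) := fun h => hc ⟨hf, h⟩
  push_neg at hnall
  obtain ⟨g, hgf, hng⟩ := hnall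
  obtain ⟨hI1, hI2, hI3⟩ := hcross
  have hIlo := lo_le_hi I
  have hJlo := lo_le_hi J
  have hng' : g.f I.hi = 0 ∨ g.f J.lo = 0 := by
    by_cases h : g.f I.hi = 0
    · exact Or.inl h
    · exact Or.inr (hng h)
  clear hng
  rename' hng' => hng
  by_cases hlt : J.lo < I.hi
  · rcases hng with hg0 | hg0
    · -- top reduction of I
      obtain ⟨I', prC, hlo', hhi', hproj, hfactor⟩ := topRed D I (by omega)
      obtain ⟨g2, hg2⟩ := hfactor _ g hg0
      have hf2 : (HomotopyCategory.quotient (ModuleCat A) (ComplexShape.up ℤ)).map g2 ≠ 0 := by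
        intro h0
        apply hf
        rw [← hgf, ← hg2, Functor.map_comp, h0, comp_zero]; rfl
      obtain ⟨I'', J'', pr', inc, f'', hpr', hinc, hcr, heq⟩ :=
        ih (((I'.hi - I'.lo) + (J.hi - J.lo)).toNat) (by omega) I' J (le_refl _)
          ⟨by omega, by omega, by omega⟩ _ hf2
      refine ⟨I'', J'',
        (HomotopyCategory.quotient (ModuleCat A) (ComplexShape.up ℤ)).map prC ≫ pr',
        inc, f'', IsProjection.comp _ _ hproj hpr', hinc, hcr, ?_⟩
      rw [← hgf, ← hg2, Functor.map_comp, heq]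
      exact (Category.assoc _ _ _).symm
    · -- bottom reduction of J
      obtain ⟨J', ιC, hlo', hhi', hinc, hfactor⟩ := botRed D J (by omega)
      obtain ⟨g2, hg2⟩ := hfactor _ g hg0
      have hf2 : (HomotopyCategory.quotient (ModuleCat A) (ComplexShape.up ℤ)).map g2 ≠ 0 := by
        intro h0
        apply hf
        rw [← hgf, ← hg2, Functor.map_comp, h0, zero_comp]; rfl
      obtain ⟨I'', J'', pr', inc', f'', hpr', hinc', hcr, heq⟩ :=
        ih (((I.hi - I.lo) + (J'.hi - J'.lo)).toNat) (by omega) I J' (le_refl _)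
          ⟨by omega, by omega, by omega⟩ _ hf2
      refine ⟨I'', J'', pr',
        inc' ≫ (HomotopyCategory.quotient (ModuleCat A) (ComplexShape.up ℤ)).map ιC,
        f'', hpr', IsInclusion.comp _ _ hinc' hinc, hcr, ?_⟩
      rw [← hgf, ← hg2, Functor.map_comp, heq]
      exact (Category.assoc _ _ _).trans (congrArg _ (Category.assoc _ _ _))
  · -- degenerate overlap: J.lo = I.hi forces g = 0, contradiction
    exfalso
    have hIJ : J.lo = I.hi := by omega
    have hg0 : g.f I.hi = 0 := by
      rcases hng with h | h
      · exact h
      · rw [← hIJ]; exact h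
    have hgz : g = 0 := rep_zero_contra D hIJ g hg0
    apply hf
    rw [← hgf, hgz]
    exact Functor.map_zero _ _ _

end Shapes

end PaperCZ


open PaperCZ in
/--
Let N ≥ 2 and A = A(1, N). Assume X, Y belong to Λ with crossing
supports, and let f: X → Y be a nonzero morphism in K^b(A-proj). Then there exist
X′, Y′ in Λ, an inclusion inc: Y′ → Y, a projection pr: X → X′ and a crossing morphism
f′: X′ → Y′ with f = inc ∘ f′ ∘ pr in K^b(A-proj).
-/
theorem stmt_17 {k : Type*} [Field k] {N : ℕ} [NeZero N] (hN : 2 ≤ N)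
    {A : Type*} [Ring A] [Algebra k A]
    (D : CyclicNakayamaData N 1 A) (hA : IsCyclicNakayama k D) :
    ∀ I J : LamIdx N, CrossingPair I J → ∀ f : Kob D I ⟶ Kob D J, f ≠ 0 →
      ∃ (I' J' : LamIdx N) (pr : Kob D I ⟶ Kob D I') (inc : Kob D J' ⟶ Kob D J)
        (f' : Kob D I' ⟶ Kob D J'),
        IsProjection D pr ∧ IsInclusion D inc ∧ IsCrossingMor D f' ∧
        f = pr ≫ f' ≫ inc := by
  intro I J hcross f hf
  exact main_aux D ((I.hi - I.lo) + (J.hi - J.lo)).toNat I J (le_refl _) hcross f hf
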